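/- Let k be an integer with k ≥ 2 and ΛQ(y) = 2k·y^k/(1 + y^{2k}). There exists a constant C > 0, depending only on k, such that for all scales 0 < λ_in ≤ λ_out: ( ∫_0^∞ r^{−6}·(r/λ_in + 1)·(r + λ_in)·ΛQ(r/λ_in)²·ΛQ(r/λ_out)²· r dr )^{1/2} ≤ C·λ_in^{−3/2}·(λ_in/λ_out)^k. -/

import Mathlib

open MeasureTheory Set

/-- `ΛQ(y) = y Q'(y) = 2k y^k/(1+y^{2k})`. -/
noncomputable def LamQ (k : ℕ) (y : ℝ) : ℝ := 2 * k * y ^ k / (1 + y ^ (2 * k))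

lemma lamQ_nonneg (k : ℕ) {y : ℝ} (hy : 0 ≤ y) : 0 ≤ LamQ k y := by
  unfold LamQ
  have h1 : (0:ℝ) ≤ 2 * k * y ^ k := by positivity
  have h2 : (0:ℝ) ≤ 1 + y ^ (2 * k) := by positivity
  exact div_nonneg h1 h2

lemma lamQ_le (k : ℕ) {y : ℝ} (hy : 0 ≤ y) : LamQ k y ≤ 2 * k * y ^ k := by
  unfold LamQ
  have h1 : (0:ℝ) ≤ 2 * k * y ^ k := by positivity
  have h2 : (1:ℝ) ≤ 1 + y ^ (2 * k) := by linarith [pow_nonneg hy (2*k)]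
  exact div_le_self h1 h2

lemma lamQ_le_inv (k : ℕ) {y : ℝ} (hy : 0 < y) : LamQ k y ≤ 2 * k * (1 / y) ^ k := by
  have hyk : (0:ℝ) < y ^ k := pow_pos hy k
  have hnum : (0:ℝ) ≤ 2 * k * y ^ k := by positivity
  have step : LamQ k y ≤ 2 * k * y ^ k / y ^ (2*k) := by
    unfold LamQ
    gcongr
    linarith [pow_pos hy (2*k)]
  have h2k : y ^ (2*k) = y ^ k * y ^ k := by rw [two_mul, pow_add]
  calc LamQ k y ≤ 2 * k * y ^ k / y ^ (2*k) := step
    _ = 2 * k * (1/y) ^ k := by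
        rw [h2k, one_div, inv_pow]; field_simp

/-- Weighted `L²(r dr)` estimate dual to the Morawetz norm: for `k ≥ 2` there exists
`C = C(k) > 0` such that for all `0 < λ_in ≤ λ_out`,
`‖r^{-3} √((r/λ_in + 1)(r + λ_in)) ΛQ(r/λ_in) ΛQ(r/λ_out)‖_{L²(r dr)}
  ≤ C λ_in^{-3/2} (λ_in/λ_out)^k`. -/
theorem stmt_9 (k : ℕ) (hk : 2 ≤ k) :
    ∃ C > (0 : ℝ), ∀ lin lout : ℝ, 0 < lin → lin ≤ lout →
      Real.sqrt (∫ r in Set.Ioi (0 : ℝ),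
          r ^ (-(6 : ℤ)) * ((r / lin + 1) * (r + lin)) *
            (LamQ k (r / lin)) ^ 2 * (LamQ k (r / lout)) ^ 2 * r)
        ≤ C * lin ^ (-(3 : ℝ) / 2) * (lin / lout) ^ k := by
  have hk0 : (0:ℝ) < (k:ℝ) := by exact_mod_cast (by omega : 0 < k)
  refine ⟨8 * (k:ℝ)^2, by positivity, fun a b ha hab => ?_⟩
  have hb : 0 < b := lt_of_lt_of_le ha hab
  obtain ⟨m, rfl⟩ : ∃ m, k = m + 2 := ⟨k - 2, by omega⟩
  set K : ℝ := ((m + 2 : ℕ) : ℝ) with hK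
  -- constants
  set D : ℝ := 64 * K^4 * a^(2*(m+2)) / (a^7 * b^(2*(m+2))) with hD
  set E : ℝ := 64 * K^4 * a^(2*(m+2)) / (a * b^(2*(m+2))) with hE
  have hDpos : 0 ≤ D := by positivity
  have hEpos : 0 ≤ E := by positivity
  set g : ℝ → ℝ := fun r => if r ≤ a then D * r^3 else E * r^(-3:ℝ) with hg
  set f : ℝ → ℝ := fun r => r ^ (-(6 : ℤ)) * ((r / a + 1) * (r + a)) *
            (LamQ (m+2) (r / a)) ^ 2 * (LamQ (m+2) (r / b)) ^ 2 * r with hf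
  have hzp : ∀ r : ℝ, r ^ (-(6:ℤ)) = (r^6)⁻¹ := fun r => by
    rw [zpow_neg]; norm_cast
  -- integrability of g pieces
  have hg1 : IntegrableOn g (Ioc 0 a) := by
    have : IntegrableOn (fun r : ℝ => D * r^3) (Ioc 0 a) :=
      (Continuous.integrableOn_Ioc (by continuity))
    exact this.congr_fun (fun x hx => (if_pos hx.2).symm) measurableSet_Ioc
  have hg2 : IntegrableOn g (Ioi a) := by
    have : IntegrableOn (fun r : ℝ => E * r^(-3:ℝ)) (Ioi a) :=
      (integrableOn_Ioi_rpow_of_lt (by norm_num) ha).const_mul E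
    exact this.congr_fun (fun x hx => (if_neg (not_le.2 hx)).symm) measurableSet_Ioi
  have hgi : IntegrableOn g (Ioi 0) := by
    rw [← Ioc_union_Ioi_eq_Ioi ha.le]
    exact hg1.union hg2
  -- pointwise bound
  have hfg : ∀ r ∈ Ioi (0:ℝ), f r ≤ g r := by
    intro r hr
    have hr0 : 0 < r := hr
    simp only [hf, hzp]
    by_cases hra : r ≤ a
    · rw [hg]; simp only [if_pos hra]
      have key : r^(4*m) ≤ a^(4*m) := pow_le_pow_left₀ hr0.le hra _
      calc (r^6)⁻¹ * ((r / a + 1) * (r + a)) * (LamQ (m+2) (r / a)) ^ 2 *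
              (LamQ (m+2) (r / b)) ^ 2 * r
          ≤ (r^6)⁻¹ * (2 * (2*a)) * (2 * K * (r/a)^(m+2)) ^ 2 *
              (2 * K * (r/b)^(m+2)) ^ 2 * r := by
            have h1 : r / a ≤ 1 := (div_le_one ha).2 hra
            have h0 : (0:ℝ) ≤ r / a := div_nonneg hr0.le ha.le
            have h0' : (0:ℝ) ≤ r / b := div_nonneg hr0.le hb.le
            gcongr (r^6)⁻¹ * ?_ * ?_ ^ 2 * ?_ ^ 2 * r
            · exact mul_le_mul (by linarith) (by linarith) (by linarith)
                (by norm_num)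
            · exact lamQ_nonneg _ h0
            · exact lamQ_le _ h0
            · exact lamQ_nonneg _ h0'
            · exact lamQ_le _ h0'
        _ = 64 * K^4 * a * r^(4*m) * r^3 / (a^(2*(m+2)) * b^(2*(m+2))) := by
            rw [div_pow, div_pow]
            field_simp
            ring
        _ ≤ 64 * K^4 * a * a^(4*m) * r^3 / (a^(2*(m+2)) * b^(2*(m+2))) := by
            gcongr
        _ = D * r^3 := by
            rw [hD]
            field_simp
            ring
    · push_neg at hra
      rw [hg]; simp only [if_neg (not_le.2 hra)]
      have hrp : r^(-3:ℝ) = (r^3)⁻¹ := by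
        rw [show (-3:ℝ) = -((3:ℕ):ℝ) by norm_num, Real.rpow_neg hr0.le,
          Real.rpow_natCast]
      rw [hrp]
      have h1 : 1 ≤ r / a := (one_le_div ha).2 hra.le
      calc (r^6)⁻¹ * ((r / a + 1) * (r + a)) * (LamQ (m+2) (r / a)) ^ 2 *
              (LamQ (m+2) (r / b)) ^ 2 * r
          ≤ (r^6)⁻¹ * ((2 * (r/a)) * (2*r)) * (2 * K * (1/(r/a))^(m+2)) ^ 2 *
              (2 * K * (r/b)^(m+2)) ^ 2 * r := by
            have h0 : (0:ℝ) < r / a := div_pos hr0 ha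
            have h0' : (0:ℝ) ≤ r / b := div_nonneg hr0.le hb.le
            gcongr (r^6)⁻¹ * ?_ * ?_ ^ 2 * ?_ ^ 2 * r
            · exact mul_le_mul (by linarith) (by linarith)
                (add_nonneg hr0.le ha.le) (by positivity)
            · exact lamQ_nonneg _ h0.le
            · exact lamQ_le_inv _ h0
            · exact lamQ_nonneg _ h0'
            · exact lamQ_le _ h0'
        _ = E * (r^3)⁻¹ := by
            rw [hE]
            rw [one_div_div, div_pow, div_pow]
            field_simp
            ring
  -- nonnegativity of f
  have hf0 : ∀ r ∈ Ioi (0:ℝ), 0 ≤ f r := by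
    intro r hr
    have hr0 : (0:ℝ) < r := hr
    simp only [hf, hzp]
    have h1 : (0:ℝ) ≤ (r^6)⁻¹ := by positivity
    have h2 : (0:ℝ) ≤ (r / a + 1) * (r + a) :=
      mul_nonneg (add_nonneg (div_nonneg hr0.le ha.le) zero_le_one)
        (add_nonneg hr0.le ha.le)
    have := sq_nonneg (LamQ (m+2) (r/a))
    have := sq_nonneg (LamQ (m+2) (r/b))
    positivity
  -- integral comparison
  have hmono : (∫ r in Ioi (0:ℝ), f r) ≤ ∫ r in Ioi (0:ℝ), g r := by
    refine integral_mono_of_nonneg ?_ hgi ?_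
    · exact (ae_restrict_iff' measurableSet_Ioi).2 (ae_of_all _ hf0)
    · exact (ae_restrict_iff' measurableSet_Ioi).2 (ae_of_all _ hfg)
  -- compute the integral of g
  have hI1 : (∫ r in Ioc (0:ℝ) a, g r) = D * (a^4 / 4) := by
    rw [setIntegral_congr_fun measurableSet_Ioc (fun x hx => if_pos hx.2)]
    rw [integral_const_mul]
    rw [← intervalIntegral.integral_of_le ha.le, integral_pow]
    norm_num
  have hI2 : (∫ r in Ioi a, g r) = E * ((a^2)⁻¹ / 2) := by
    rw [setIntegral_congr_fun measurableSet_Ioi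
      (fun x hx => if_neg (not_le.2 hx))]
    rw [integral_const_mul, integral_Ioi_rpow_of_lt (by norm_num) ha]
    rw [show (-3:ℝ) + 1 = -((2:ℕ):ℝ) by norm_num, Real.rpow_neg ha.le,
      Real.rpow_natCast]
    ring
  have hIg : (∫ r in Ioi (0:ℝ), g r) = D * (a^4/4) + E * ((a^2)⁻¹/2) := by
    rw [← Ioc_union_Ioi_eq_Ioi ha.le,
      setIntegral_union Ioc_disjoint_Ioi_same measurableSet_Ioi hg1 hg2,
      hI1, hI2]
  -- total bound
  set T : ℝ := 64 * K^4 * (a/b)^(2*(m+2)) / a^3 with hT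
  have hgT : D * (a^4/4) + E * ((a^2)⁻¹/2) ≤ T := by
    set X : ℝ := K^4 * a^(2*(m+2)) / (a^3 * b^(2*(m+2))) with hX
    have hXnn : 0 ≤ X := by positivity
    have e1 : D * (a^4/4) + E * ((a^2)⁻¹/2) = 48 * X := by
      rw [hD, hE, hX]; field_simp; ring
    have e2 : T = 64 * X := by
      rw [hT, hX, div_pow]; field_simp
    rw [e1, e2]; linarith
  have hJT : (∫ r in Ioi (0:ℝ), f r) ≤ T := by
    calc (∫ r in Ioi (0:ℝ), f r) ≤ ∫ r in Ioi (0:ℝ), g r := hmono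
      _ = D * (a^4/4) + E * ((a^2)⁻¹/2) := hIg
      _ ≤ T := hgT
  -- conclude
  have hR : T = (8 * K^2 * a ^ (-(3:ℝ)/2) * (a/b)^(m+2))^2 := by
    have h1 : (a ^ (-(3:ℝ)/2))^2 = (a^3)⁻¹ := by
      rw [sq, ← Real.rpow_add ha]
      rw [show (-(3:ℝ)/2 + -(3:ℝ)/2) = -((3:ℕ):ℝ) by norm_num,
        Real.rpow_neg ha.le, Real.rpow_natCast]
    calc T = 64 * K^4 * ((a/b)^(m+2))^2 * (a^3)⁻¹ := by
          rw [hT, ← pow_mul]; ring_nf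
      _ = (8 * K^2 * a ^ (-(3:ℝ)/2) * (a/b)^(m+2))^2 := by
          rw [mul_pow, mul_pow, mul_pow, h1]; ring
  have hRnn : 0 ≤ 8 * K^2 * a ^ (-(3:ℝ)/2) * (a/b)^(m+2) := by positivity
  calc Real.sqrt (∫ r in Ioi (0:ℝ), f r)
      ≤ Real.sqrt ((8 * K^2 * a ^ (-(3:ℝ)/2) * (a/b)^(m+2))^2) := by
        apply Real.sqrt_le_sqrt
        rw [← hR]; exact hJT
    _ = 8 * K^2 * a ^ (-(3:ℝ)/2) * (a/b)^(m+2) := Real.sqrt_sq hRnn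
    _ = 8 * (((m+2:ℕ):ℝ))^2 * a ^ (-(3:ℝ)/2) * (a/b)^(m+2) := by rw [hK]
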